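/- Let J : ℝ^N → ℝ be a finite-valued convex function, Φ : ℝ^N → ℝ^P linear, and x₀ ∈ ℝ^N. Assume ker(Φ) ∩ T_{x₀} = {0} and that there exists η ∈ Im(Φ^*) ∩ ri(∂J(x₀)). Fix c > 0. Then there exists a constant C > 0 such that for every w ∈ ℝ^P with w ≠ 0, setting y = Φx₀ + w and λ = c‖w‖, every minimizer x⋆ of x ↦ (1/(2λ))‖Φx − y‖² + J(x) satisfies ‖x⋆ − x₀‖ ≤ C‖w‖. -/

import Mathlib

open Matrix

/-- Euclidean dot product on `ℝ^n`. -/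
noncomputable def dotp {n : ℕ} (u v : Fin n → ℝ) : ℝ := ∑ i, u i * v i

/-- Euclidean (ℓ²) norm on `ℝ^n`. -/
noncomputable def nrm2 {n : ℕ} (u : Fin n → ℝ) : ℝ := Real.sqrt (∑ i, (u i) ^ 2)

/-- ℓ¹ norm on `ℝ^n`. -/
noncomputable def l1norm {n : ℕ} (u : Fin n → ℝ) : ℝ := ∑ i, |u i|

/-- ℓ^∞ norm of a finitely indexed real vector. -/
noncomputable def linf {ι : Type*} [Fintype ι] (u : ι → ℝ) : ℝ := ⨆ i, |u i|

/-- The sign function: 1 for positive, -1 for negative, 0 at 0. -/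
noncomputable def sgn (t : ℝ) : ℝ := if 0 < t then 1 else if t < 0 then -1 else 0

/-- Subdifferential of a finite-valued function `J : ℝ^n → ℝ` at `x`:
`∂J(x) = {η : J(x+δ) ≥ J(x) + ⟨η,δ⟩ for all δ}`. -/
def subdiff {n : ℕ} (J : (Fin n → ℝ) → ℝ) (x : Fin n → ℝ) : Set (Fin n → ℝ) :=
  {η | ∀ δ, J x + dotp η δ ≤ J (x + δ)}

/-- The model tangent subspace `T_x = Lin(∂J(x))^⊥`, where `Lin(E)` is the linear
space parallel to the affine hull of `E`. -/
def modelT {n : ℕ} (J : (Fin n → ℝ) → ℝ) (x : Fin n → ℝ) : Set (Fin n → ℝ) :=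
  {u | ∀ v ∈ (affineSpan ℝ (subdiff J x)).direction, dotp u v = 0}

open scoped RealInnerProductSpace

def toE {n : ℕ} (u : Fin n → ℝ) : EuclideanSpace ℝ (Fin n) := WithLp.toLp 2 u
def ofE {n : ℕ} (u : EuclideanSpace ℝ (Fin n)) : Fin n → ℝ := WithLp.ofLp u

lemma toE_inj {n : ℕ} {u v : Fin n → ℝ} (h : toE u = toE v) : u = v := congrArg WithLp.ofLp h

lemma nrm2_eq_norm {n : ℕ} (u : Fin n → ℝ) : nrm2 u = ‖toE u‖ := by
  rw [EuclideanSpace.norm_eq]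
  simp [nrm2, toE, Real.norm_eq_abs, sq_abs]

lemma dotp_eq_inner {n : ℕ} (u v : Fin n → ℝ) : dotp u v = ⟪toE u, toE v⟫ := by
  simp [dotp, toE, PiLp.inner_apply, RCLike.inner_apply, mul_comm]

lemma abs_le_nrm2 {n : ℕ} (u : Fin n → ℝ) (i : Fin n) : |u i| ≤ nrm2 u := by
  rw [nrm2, ← Real.sqrt_sq_eq_abs]
  exact Real.sqrt_le_sqrt (Finset.single_le_sum (fun j _ => sq_nonneg (u j)) (Finset.mem_univ i))

/-- sup-norm is at most the euclidean norm -/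
lemma pinorm_le_nrm2 {n : ℕ} (u : Fin n → ℝ) : ‖u‖ ≤ nrm2 u := by
  have h0 : (0:ℝ) ≤ nrm2 u := Real.sqrt_nonneg _
  exact (pi_norm_le_iff_of_nonneg h0).2 fun i => by
    rw [Real.norm_eq_abs]; exact abs_le_nrm2 u i

/-- The direction of the affine span of the subdifferential, as a submodule of
euclidean space. -/
noncomputable def Ssub {n : ℕ} (J : (Fin n → ℝ) → ℝ) (x : Fin n → ℝ) :
    Submodule ℝ (EuclideanSpace ℝ (Fin n)) :=
  (affineSpan ℝ (subdiff J x)).direction.comap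
    (WithLp.linearEquiv 2 ℝ (Fin n → ℝ)).toLinearMap

lemma mem_Ssub {n : ℕ} {J : (Fin n → ℝ) → ℝ} {x : Fin n → ℝ} (v : Fin n → ℝ) :
    toE v ∈ Ssub J x ↔ v ∈ (affineSpan ℝ (subdiff J x)).direction := Iff.rfl

lemma mem_modelT_iff {n : ℕ} {J : (Fin n → ℝ) → ℝ} {x : Fin n → ℝ} (u : Fin n → ℝ) :
    u ∈ modelT J x ↔ toE u ∈ (Ssub J x)ᗮ := by
  rw [Submodule.mem_orthogonal]
  constructor
  · intro h v hv
    have := h (ofE v) hv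
    rw [dotp_eq_inner] at this
    rw [real_inner_comm] at this
    exact this
  · intro h v hv
    rw [dotp_eq_inner, real_inner_comm]
    exact h (toE v) hv

/-- The matrix as a continuous linear map between euclidean spaces. -/
noncomputable def Amap {N P : ℕ} (Φ : Matrix (Fin P) (Fin N) ℝ) :
    EuclideanSpace ℝ (Fin N) →L[ℝ] EuclideanSpace ℝ (Fin P) :=
  LinearMap.toContinuousLinearMap
    ((WithLp.linearEquiv 2 ℝ (Fin P → ℝ)).symm.toLinearMap ∘ₗ Φ.mulVecLin ∘ₗ
      (WithLp.linearEquiv 2 ℝ (Fin N → ℝ)).toLinearMap)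

lemma Amap_apply {N P : ℕ} (Φ : Matrix (Fin P) (Fin N) ℝ) (u : Fin N → ℝ) :
    Amap Φ (toE u) = toE (Φ.mulVec u) := rfl

/-- antilipschitz bound for injective linear maps from a finite-dim space -/
lemma exists_antilip {E F : Type*} [NormedAddCommGroup E] [NormedSpace ℝ E]
    [NormedAddCommGroup F] [NormedSpace ℝ F] [FiniteDimensional ℝ E]
    (f : E →ₗ[ℝ] F) (hf : Function.Injective f) :
    ∃ C > (0:ℝ), ∀ u, ‖u‖ ≤ C * ‖f u‖ := by
  let e := LinearEquiv.ofInjective f hf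
  let e' := e.toContinuousLinearEquiv
  obtain ⟨K, halip⟩ : ∃ K : NNReal, AntilipschitzWith K e' := ⟨_, e'.antilipschitz⟩
  refine ⟨(K : ℝ) + 1, by positivity, fun u => ?_⟩
  have h1 : ‖u‖ ≤ (K : ℝ) * ‖e' u‖ := by
    have := halip.le_mul_dist u 0
    simpa [dist_eq_norm] using this
  have h2 : ‖e' u‖ = ‖f u‖ := by
    have : ((e' u : LinearMap.range f) : F) = f u := rfl
    rw [← this]; rfl
  rw [h2] at h1
  nlinarith [norm_nonneg (f u), norm_nonneg u]

/-- ε-ball property from the intrinsic interior. -/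
lemma exists_eps {n : ℕ} {J : (Fin n → ℝ) → ℝ} {x₀ η : Fin n → ℝ}
    (hη : η ∈ intrinsicInterior ℝ (subdiff J x₀)) :
    ∃ ε > (0:ℝ), ∀ v : Fin n → ℝ,
      v ∈ (affineSpan ℝ (subdiff J x₀)).direction → ‖v‖ < ε → η + v ∈ subdiff J x₀ := by
  obtain ⟨z, hz, hzη⟩ := hη
  rw [mem_interior_iff_mem_nhds, Metric.mem_nhds_iff] at hz
  obtain ⟨ε, hε, hball⟩ := hz
  have hηs : η ∈ subdiff J x₀ := by
    exact intrinsicInterior_subset ⟨z, mem_interior_iff_mem_nhds.2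
      (Metric.mem_nhds_iff.2 ⟨ε, hε, hball⟩), hzη⟩
  have hηaff : η ∈ affineSpan ℝ (subdiff J x₀) := subset_affineSpan ℝ _ hηs
  refine ⟨ε, hε, fun v hv hvn => ?_⟩
  have hmem : η + v ∈ affineSpan ℝ (subdiff J x₀) := by
    have := AffineSubspace.vadd_mem_of_mem_direction hv hηaff
    simpa [add_comm] using this
  have hz' : (z : Fin n → ℝ) = η := hzη
  have : (⟨η + v, hmem⟩ : affineSpan ℝ (subdiff J x₀)) ∈ Metric.ball z ε := by
    rw [Metric.mem_ball, Subtype.dist_eq, hz']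
    simpa [dist_eq_norm] using hvn
  exact hball this

lemma dotp_transpose {N P : ℕ} (Φ : Matrix (Fin P) (Fin N) ℝ) (p : Fin P → ℝ)
    (d : Fin N → ℝ) : dotp (Φᵀ.mulVec p) d = dotp p (Φ.mulVec d) := by
  have h1 : dotp (Φᵀ.mulVec p) d = (Φᵀ.mulVec p) ⬝ᵥ d := rfl
  have h2 : dotp p (Φ.mulVec d) = p ⬝ᵥ (Φ.mulVec d) := rfl
  rw [h1, h2, Matrix.mulVec_transpose, ← Matrix.dotProduct_mulVec]


set_option maxHeartbeats 2000000 in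
/-- linear convergence rate (ℓ² stability). Under the restricted
injectivity condition `ker(Φ) ∩ T_{x₀} = {0}` and existence of a non-degenerate
dual certificate `η ∈ Im(Φ^*) ∩ ri(∂J(x₀))`, for the choice `λ = c‖w‖` every
minimizer `x⋆` of `(1/(2λ))‖Φx − (Φx₀ + w)‖² + J(x)` satisfies
`‖x⋆ − x₀‖ ≤ C‖w‖`. -/
theorem stmt5 {N P : ℕ} (J : (Fin N → ℝ) → ℝ) (hJ : ConvexOn ℝ Set.univ J)
    (Φ : Matrix (Fin P) (Fin N) ℝ) (x₀ : Fin N → ℝ)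
    (hker : {x : Fin N → ℝ | Φ.mulVec x = 0} ∩ modelT J x₀ = {0})
    (hcert : ∃ η ∈ intrinsicInterior ℝ (subdiff J x₀), ∃ p : Fin P → ℝ, η = Φᵀ.mulVec p)
    (c : ℝ) (hc : 0 < c) :
    ∃ C > (0:ℝ), ∀ w : Fin P → ℝ, w ≠ 0 →
      ∀ xs : Fin N → ℝ,
        (∀ x, (1 / (2 * (c * nrm2 w))) * nrm2 (Φ.mulVec xs - (Φ.mulVec x₀ + w)) ^ 2 + J xs ≤
              (1 / (2 * (c * nrm2 w))) * nrm2 (Φ.mulVec x - (Φ.mulVec x₀ + w)) ^ 2 + J x) →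
        nrm2 (xs - x₀) ≤ C * nrm2 w := by
  obtain ⟨η, hηri, p, hηp⟩ := hcert
  obtain ⟨ε, hε, hball⟩ := exists_eps hηri
  set S := Ssub J x₀ with hSdef
  -- restricted injectivity and the antilipschitz constant C₁
  have hinj : Function.Injective ((Amap Φ).toLinearMap ∘ₗ (Sᗮ).subtype) := by
    rw [injective_iff_map_eq_zero]
    intro u hu
    set uf := ofE (u : EuclideanSpace ℝ (Fin N)) with hufdef
    have h1 : Φ.mulVec uf = 0 := by
      have h : Amap Φ (toE uf) = toE (0 : Fin P → ℝ) := hu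
      rw [Amap_apply] at h
      exact toE_inj h
    have h2 : uf ∈ modelT J x₀ := (mem_modelT_iff uf).2 u.2
    have h3 : uf ∈ ({0} : Set (Fin N → ℝ)) := by
      rw [← hker]; exact ⟨h1, h2⟩
    have h4 : uf = 0 := h3
    exact Subtype.ext (congrArg (WithLp.toLp 2) h4)
  obtain ⟨C₁, hC₁, hanti⟩ := exists_antilip _ hinj
  set nA := ‖Amap Φ‖ with hnAdef
  have hnA : 0 ≤ nA := norm_nonneg _
  set np := ‖toE p‖ with hnpdef
  have hnp : 0 ≤ np := norm_nonneg _
  set εh := ε / 2 with hεhdef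
  have hεh : 0 < εh := by positivity
  set K2 := (1/(2*c) + np*(2*c*np+2))/εh with hK2def
  have hK2 : 0 ≤ K2 := by positivity
  set C := C₁*(2*c*np+2) + (C₁*nA + 1)*K2 + 1 with hCdef
  have hCpos : 0 < C := by nlinarith [mul_nonneg (le_of_lt hC₁) (by nlinarith : (0:ℝ) ≤ 2*c*np+2), mul_nonneg (by nlinarith : (0:ℝ) ≤ C₁*nA+1) hK2]
  refine ⟨C, hCpos, ?_⟩
  intro w hw xs hmin
  -- basic quantities
  set b := nrm2 w with hbdef
  have hb : 0 < b := by
    rw [hbdef, nrm2_eq_norm]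
    rw [norm_pos_iff]
    intro h0
    exact hw (toE_inj h0)
  set d := xs - x₀ with hddef
  set dE := toE d with hdEdef
  set wE := toE w with hwEdef
  set rf := Φ.mulVec d - w with hrfdef
  set rE := toE rf with hrEdef
  have hresid : Φ.mulVec xs - (Φ.mulVec x₀ + w) = rf := by
    rw [hrfdef, hddef, Matrix.mulVec_sub, sub_add_eq_sub_sub]
  have hAd : Amap Φ dE = rE + wE := by
    rw [hdEdef, Amap_apply, hrEdef, hwEdef]
    show toE (Φ.mulVec d) = toE (Φ.mulVec d - w + w)
    rw [sub_add_cancel]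
  set a := ‖rE‖ with hadef
  have ha0 : 0 ≤ a := norm_nonneg _
  -- minimality at x₀
  have hmin₀ : (1 / (2*(c*b))) * a^2 + J xs ≤ (1 / (2*(c*b))) * b^2 + J x₀ := by
    have h := hmin x₀
    rw [hresid] at h
    have hx0 : Φ.mulVec x₀ - (Φ.mulVec x₀ + w) = -w := by
      rw [sub_add_eq_sub_sub, sub_self, zero_sub]
    rw [hx0] at h
    have hnw : nrm2 (-w) = b := by
      rw [nrm2_eq_norm]
      show ‖-toE w‖ = b
      rw [norm_neg, ← nrm2_eq_norm]
    rw [hnw] at h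
    have hnr : nrm2 rf = a := by rw [hadef, hrEdef, nrm2_eq_norm]
    rw [hnr] at h
    exact h
  -- orthogonal projection of dE onto S
  set q := ((S.orthogonalProjectionOnto dE : S) : EuclideanSpace ℝ (Fin N)) with hqdef
  have hqS : q ∈ S := SetLike.coe_mem _
  have hdq : dE - q ∈ Sᗮ := S.sub_starProjection_mem_orthogonal dE
  set qn := ‖q‖ with hqndef
  have hqn0 : 0 ≤ qn := norm_nonneg _
  have hqinner : ⟪q, dE⟫ = qn^2 := by
    have h0 : ⟪q, dE - q⟫ = 0 := (Submodule.mem_orthogonal _ _).1 hdq q hqS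
    rw [inner_sub_right] at h0
    have : ⟪q, dE⟫ = ⟪q, q⟫ := by linarith
    rw [this, real_inner_self_eq_norm_sq]
  -- the uniform subgradient inequality
  have hxsd : x₀ + d = xs := by rw [hddef, add_sub_cancel]
  have hsub : J x₀ + dotp η d + εh * qn ≤ J xs := by
    by_cases hq0 : q = 0
    · have : qn = 0 := by rw [hqndef, hq0, norm_zero]
      rw [this, mul_zero, add_zero]
      have hηs : η ∈ subdiff J x₀ := intrinsicInterior_subset hηri
      have := hηs d
      rwa [hxsd] at this
    · have hqnpos : 0 < qn := by
        rw [hqndef]; exact norm_pos_iff.2 hq0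
      set v := ofE ((εh / qn) • q) with hvdef
      have htv : toE v = (εh / qn) • q := rfl
      have hvS : toE v ∈ S := by rw [htv]; exact S.smul_mem _ hqS
      have hv_dir := (mem_Ssub v).1 hvS
      have hvnorm : ‖toE v‖ = εh := by
        rw [htv, norm_smul, Real.norm_eq_abs, abs_of_pos (by positivity)]
        field_simp
        rfl
      have hvsup : ‖v‖ < ε := by
        refine lt_of_le_of_lt (pinorm_le_nrm2 v) ?_
        rw [nrm2_eq_norm, hvnorm]
        linarith
      have hmem := hball v hv_dir hvsup
      have hineq := hmem d
      rw [hxsd] at hineq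
      have hd1 : dotp (η + v) d = dotp η d + dotp v d := by
        rw [dotp_eq_inner, dotp_eq_inner, dotp_eq_inner]
        show ⟪toE η + toE v, dE⟫ = ⟪toE η, dE⟫ + ⟪toE v, dE⟫
        rw [inner_add_left]
      have hd2 : dotp v d = εh * qn := by
        rw [dotp_eq_inner, htv]
        show ⟪(εh / qn) • q, dE⟫ = εh * qn
        rw [real_inner_smul_left, hqinner]
        field_simp
      rw [hd1, hd2] at hineq
      linarith
  -- adjoint identity
  have hadj : dotp η d = ⟪toE p, rE⟫ + ⟪toE p, wE⟫ := by
    rw [hηp, dotp_transpose, dotp_eq_inner]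
    have : toE (Φ.mulVec d) = Amap Φ dE := (Amap_apply Φ d).symm
    rw [this, hAd, inner_add_right]
  -- Cauchy-Schwarz bounds
  have hpr : -(np*a) ≤ ⟪toE p, rE⟫ := by
    have h := real_inner_le_norm (toE p) (-rE)
    rw [inner_neg_right, norm_neg] at h
    linarith
  have hpw : -(np*b) ≤ ⟪toE p, wE⟫ := by
    have h := real_inner_le_norm (toE p) (-wE)
    rw [inner_neg_right, norm_neg] at h
    have : ‖wE‖ = b := by rw [hwEdef, ← nrm2_eq_norm]
    rw [this] at h
    linarith
  -- key inequality
  set μ := 1 / (2*(c*b)) with hμdef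
  have h2cb : (0:ℝ) < 2*(c*b) := by positivity
  have hμpos : 0 < μ := by positivity
  have key : μ*a^2 + (⟪toE p, rE⟫ + ⟪toE p, wE⟫) + εh*qn ≤ μ*b^2 := by
    linarith [hmin₀, hsub, hadj]
  have hμb : μ * b^2 = (1/(2*c)) * b := by
    rw [hμdef]; field_simp
  -- bound a
  have key3 : a^2 - b^2 ≤ 2*(c*b)*(np*a + np*b) := by
    have hX : -(⟪toE p, rE⟫ + ⟪toE p, wE⟫ + εh*qn) ≤ np*a + np*b := by
      have : 0 ≤ εh * qn := by positivity
      linarith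
    have step : μ*(a^2 - b^2) ≤ -(⟪toE p, rE⟫ + ⟪toE p, wE⟫ + εh*qn) := by
      rw [mul_sub]; linarith
    have h := (mul_le_mul_of_nonneg_left step h2cb.le).trans
      (mul_le_mul_of_nonneg_left hX h2cb.le)
    have hone : 2*(c*b) * μ = 1 := by
      rw [hμdef]; field_simp
    rw [← mul_assoc, hone, one_mul] at h
    exact h
  have ha : a ≤ (2*c*np+1)*b := by
    by_contra hcon
    push_neg at hcon
    have hapos : 0 < a := lt_of_le_of_lt (by positivity) hcon
    nlinarith [mul_lt_mul_of_pos_right hcon hapos, mul_lt_mul_of_pos_right hcon hb]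
  -- bound qn
  have hqnb : qn ≤ K2 * b := by
    have h1 : εh * qn ≤ (1/(2*c) + np*(2*c*np+2)) * b := by
      have h2 : εh*qn ≤ μ*b^2 + np*a + np*b := by nlinarith [mul_nonneg hμpos.le (sq_nonneg a)]
      rw [hμb] at h2
      nlinarith
    rw [hK2def, div_mul_eq_mul_div, le_div_iff₀ hεh]
    linarith [h1]
  -- bound the tangent part
  have htang : ‖dE - q‖ ≤ C₁ * ((2*c*np+2)*b + nA * qn) := by
    have h1 := hanti ⟨dE - q, hdq⟩
    have h2 : ‖(⟨dE - q, hdq⟩ : (Sᗮ : Submodule ℝ (EuclideanSpace ℝ (Fin N))))‖ = ‖dE - q‖ := rfl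
    have h3 : ((Amap Φ).toLinearMap ∘ₗ (Sᗮ).subtype) ⟨dE - q, hdq⟩ = Amap Φ (dE - q) := rfl
    rw [h2, h3] at h1
    have h4 : ‖Amap Φ (dE - q)‖ ≤ (2*c*np+2)*b + nA * qn := by
      have h5 : Amap Φ (dE - q) = Amap Φ dE - Amap Φ q := by rw [map_sub]
      rw [h5]
      have h6 : ‖Amap Φ dE - Amap Φ q‖ ≤ ‖Amap Φ dE‖ + ‖Amap Φ q‖ := norm_sub_le _ _
      have h7 : ‖Amap Φ dE‖ ≤ a + b := by
        rw [hAd]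
        have := norm_add_le rE wE
        have hwEb : ‖wE‖ = b := by rw [hwEdef, ← nrm2_eq_norm]
        rw [hwEb] at this
        exact this
      have h8 : ‖Amap Φ q‖ ≤ nA * qn := (Amap Φ).le_opNorm q
      nlinarith
    calc ‖dE - q‖ ≤ C₁ * ‖Amap Φ (dE - q)‖ := h1
      _ ≤ C₁ * ((2*c*np+2)*b + nA * qn) := mul_le_mul_of_nonneg_left h4 hC₁.le
  -- conclude
  have hgoal : ‖dE‖ ≤ C * b := by
    have h1 : ‖dE‖ ≤ ‖dE - q‖ + qn := by
      have : dE = (dE - q) + q := by abel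
      calc ‖dE‖ = ‖(dE - q) + q‖ := by rw [← this]
        _ ≤ ‖dE - q‖ + ‖q‖ := norm_add_le _ _
    have h2 : C₁ * nA * qn + qn ≤ (C₁*nA + 1) * (K2 * b) := by
      have : C₁ * nA * qn + qn = (C₁*nA + 1) * qn := by ring
      rw [this]
      exact mul_le_mul_of_nonneg_left hqnb (by positivity)
    rw [hCdef]
    nlinarith [htang, h1, h2, hb.le]
  rw [show nrm2 (xs - x₀) = ‖dE‖ by rw [hdEdef, hddef, nrm2_eq_norm]]
  exact hgoal
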